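/- Let N ≥ 5, h = 1/(N+1), and δ ≤ h. Let S_δ be the N×N symmetric matrix with entries (S_δ)_{jk} = (1/h)·(2 − r(2−α)/(3−α)) if j = k, (1/h)·(−1 + 2r(2−α)/(3(3−α))) if |j−k| = 1, (1/h)·(−r(2−α)/(6(3−α))) if |j−k| = 2, and 0 otherwise, where r = δ/h ∈ (0,1) and α ∈ [−1, 2). Then S_δ is diagonally dominant and all its off-diagonal entries are non-positive; moreover all off-diagonal nonzero entries are strictly negative. -/

import Mathlib

open Finset

/-- For `δ ≤ h` (with `r = δ/h ∈ (0,1)`) and `α ∈ [−1,2)`, the pentadiagonal nonlocal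
stiffness matrix is diagonally dominant, its off-diagonal entries are nonpositive, and its
nonzero off-diagonal entries are strictly negative. -/
theorem nonlocal_stiffness_diag_dominant (N : ℕ) (hN : 5 ≤ N) (h δ α : ℝ)
    (hh : 0 < h) (hδ0 : 0 < δ) (hδh : δ ≤ h) (hα1 : -1 ≤ α) (hα2 : α < 2)
    (hr0 : 0 < δ / h) (hr1 : δ / h < 1) :
    let r : ℝ := δ / h
    let S : Matrix (Fin N) (Fin N) ℝ := fun j k =>
      if j = k then (1 / h) * (2 - r * (2 - α) / (3 - α))
      else if |(j : ℤ) - (k : ℤ)| = 1 then (1 / h) * (-1 + 2 * r * (2 - α) / (3 * (3 - α)))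
      else if |(j : ℤ) - (k : ℤ)| = 2 then (1 / h) * (-(r * (2 - α) / (6 * (3 - α))))
      else 0
    (∀ k : Fin N, ∑ j ∈ univ.erase k, |S k j| ≤ |S k k|) ∧
    (∀ j k : Fin N, j ≠ k → S j k ≤ 0) ∧
    (∀ j k : Fin N, j ≠ k → S j k ≠ 0 → S j k < 0) := by
  intro r S
  have h3 : (0:ℝ) < 3 - α := by linarith
  have h2 : (0:ℝ) < 2 - α := by linarith
  have hrpos : 0 < r := hr0
  have hrlt : r < 1 := hr1
  have h1h : (0:ℝ) < 1 / h := by positivity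
  have hkey : r * (2 - α) < 3 - α := by nlinarith
  set v1 : ℝ := (1 / h) * (-1 + 2 * r * (2 - α) / (3 * (3 - α))) with hv1
  set v2 : ℝ := (1 / h) * (-(r * (2 - α) / (6 * (3 - α)))) with hv2
  have hv1neg : v1 < 0 := by
    have hlt : 2 * r * (2 - α) / (3 * (3 - α)) < 1 := by
      rw [div_lt_one (by positivity)]; nlinarith
    rw [hv1]; nlinarith
  have hv2neg : v2 < 0 := by
    have hp : 0 < r * (2 - α) / (6 * (3 - α)) := by positivity
    rw [hv2]; nlinarith
  have hdiag : ∀ k : Fin N, S k k = (1 / h) * (2 - r * (2 - α) / (3 - α)) := by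
    intro k; simp [S]
  have hdiagpos : (0:ℝ) < (1 / h) * (2 - r * (2 - α) / (3 - α)) := by
    have : r * (2 - α) / (3 - α) < 1 := by rw [div_lt_one h3]; exact hkey
    nlinarith
  have hoff : ∀ j k : Fin N, j ≠ k →
      S j k = (if |(j : ℤ) - (k : ℤ)| = 1 then v1
        else if |(j : ℤ) - (k : ℤ)| = 2 then v2 else 0) := by
    intro j k hjk
    simp only [S, Matrix.of_apply, if_neg hjk]; rfl
  have hoffnonpos : ∀ j k : Fin N, j ≠ k → S j k ≤ 0 := by
    intro j k hjk
    rw [hoff j k hjk]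
    split_ifs <;> linarith
  refine ⟨?_, hoffnonpos, ?_⟩
  · intro k
    have hcard : ∀ m : ℤ, (((univ : Finset (Fin N)).erase k).filter
        (fun j : Fin N => |(k:ℤ) - (j:ℤ)| = m)).card ≤ 2 := by
      intro m
      have hsub : (((univ : Finset (Fin N)).erase k).filter
          (fun j : Fin N => |(k:ℤ) - (j:ℤ)| = m)).card
          ≤ ({(k:ℤ) + m, (k:ℤ) - m} : Finset ℤ).card :=
        Finset.card_le_card_of_injOn (fun j : Fin N => ((j : ℤ)))
          (by
            intro j hj
            simp only [mem_coe, mem_filter] at hj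
            have := hj.2
            simp only [mem_coe, mem_insert, mem_singleton]
            rcases abs_cases ((k:ℤ) - (j:ℤ)) with ⟨e1, _⟩ | ⟨e1, _⟩ <;> omega)
          (by
            intro a _ b _ hab
            have hab' : ((a:ℤ)) = ((b:ℤ)) := hab
            exact Fin.ext (by exact_mod_cast hab'))
      refine hsub.trans ?_
      refine le_trans (Finset.card_insert_le _ _) ?_
      simp
    have hpoint : ∀ j ∈ (univ : Finset (Fin N)).erase k, |S k j| ≤
        (if |(k:ℤ) - (j:ℤ)| = 1 then -v1 else 0)
        + (if |(k:ℤ) - (j:ℤ)| = 2 then -v2 else 0) := by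
      intro j hj
      have hjk : k ≠ j := fun e => (Finset.ne_of_mem_erase hj) e.symm
      rw [hoff k j hjk]
      by_cases h1 : |(k:ℤ) - (j:ℤ)| = 1
      · have h2' : ¬ |(k:ℤ) - (j:ℤ)| = 2 := by omega
        rw [if_pos h1, if_pos h1, if_neg h2', abs_of_neg hv1neg]
        linarith
      · rw [if_neg h1, if_neg h1]
        by_cases h2' : |(k:ℤ) - (j:ℤ)| = 2
        · rw [if_pos h2', if_pos h2', abs_of_neg hv2neg]
          linarith
        · rw [if_neg h2', if_neg h2']
          simp
    calc ∑ j ∈ univ.erase k, |S k j|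
        ≤ ∑ j ∈ univ.erase k, ((if |(k:ℤ) - (j:ℤ)| = 1 then -v1 else 0)
          + (if |(k:ℤ) - (j:ℤ)| = 2 then -v2 else 0)) := Finset.sum_le_sum hpoint
      _ = (∑ j ∈ univ.erase k, (if |(k:ℤ) - (j:ℤ)| = 1 then -v1 else 0))
          + (∑ j ∈ univ.erase k, (if |(k:ℤ) - (j:ℤ)| = 2 then -v2 else 0)) :=
        Finset.sum_add_distrib
      _ ≤ 2 * (-v1) + 2 * (-v2) := by
        have e1 : (∑ j ∈ univ.erase k, (if |(k:ℤ) - (j:ℤ)| = 1 then -v1 else 0))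
            = ((((univ : Finset (Fin N)).erase k).filter
              (fun j : Fin N => |(k:ℤ) - (j:ℤ)| = 1)).card : ℝ) * (-v1) := by
          rw [← Finset.sum_filter, Finset.sum_const, nsmul_eq_mul]
        have e2 : (∑ j ∈ univ.erase k, (if |(k:ℤ) - (j:ℤ)| = 2 then -v2 else 0))
            = ((((univ : Finset (Fin N)).erase k).filter
              (fun j : Fin N => |(k:ℤ) - (j:ℤ)| = 2)).card : ℝ) * (-v2) := by
          rw [← Finset.sum_filter, Finset.sum_const, nsmul_eq_mul]
        rw [e1, e2]
        have c1 : ((((univ : Finset (Fin N)).erase k).filter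
            (fun j : Fin N => |(k:ℤ) - (j:ℤ)| = 1)).card : ℝ) ≤ 2 := by
          exact_mod_cast hcard 1
        have c2 : ((((univ : Finset (Fin N)).erase k).filter
            (fun j : Fin N => |(k:ℤ) - (j:ℤ)| = 2)).card : ℝ) ≤ 2 := by
          exact_mod_cast hcard 2
        have := mul_le_mul_of_nonneg_right c1 (by linarith : (0:ℝ) ≤ -v1)
        have := mul_le_mul_of_nonneg_right c2 (by linarith : (0:ℝ) ≤ -v2)
        linarith
      _ = (1 / h) * (2 - r * (2 - α) / (3 - α)) := by
        rw [hv1, hv2]; field_simp; ring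
      _ ≤ |S k k| := by rw [hdiag k, abs_of_pos hdiagpos]
  · intro j k hjk hne
    rcases lt_or_eq_of_le (hoffnonpos j k hjk) with hlt | heq
    · exact hlt
    · exact absurd heq hne
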